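/- Fix an integer $q \ge 1$ and real numbers $a_0 > 0, a_1, \dots, a_{q-1}$, and let $Q(z) := -z^{-q}\left(\frac{a_0}{q} + \frac{a_1}{q-1}z + \cdots + a_{q-1}z^{q-1}\right)$. Let $P_1, P_2 \in \mathbb{R}[z]$ be distinct polynomials, each with $P_i(0)=0$, positive lowest-order coefficient, and $\deg P_i < (q+1)\,\mathrm{ord}(P_i)$. Then the formal Laurent series $Q \circ P_1 - Q \circ P_2 \in \mathbb{R}(\!(z)\!)$ has a nonzero principal part, i.e. some coefficient of a strictly negative power of $z$ is nonzero. -/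

import Mathlib

/-- The formal Laurent series `Q ∘ P`, where
`Q(z) = -z^{-q} (a₀/q + a₁/(q-1) z + ⋯ + a_{q-1} z^{q-1})`. -/
noncomputable def QcompP (q : ℕ) (a : ℕ → ℝ) (P : Polynomial ℝ) : LaurentSeries ℝ :=
  -(∑ j ∈ Finset.range q,
      (a j / ((q : ℝ) - j)) • (((P : PowerSeries ℝ) : LaurentSeries ℝ)) ^ j) /
    ((P : PowerSeries ℝ) : LaurentSeries ℝ) ^ q

namespace Stmt3Aux
open Polynomial Finset

lemma mul_coeff_zero {A B : Polynomial ℝ} {α β : ℕ}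
    (hA : ∀ i < α, A.coeff i = 0) (hB : ∀ i < β, B.coeff i = 0) :
    ∀ n < α + β, (A * B).coeff n = 0 := by
  intro n hn
  rw [Polynomial.coeff_mul]
  refine Finset.sum_eq_zero fun ij hij => ?_
  rw [Finset.HasAntidiagonal.mem_antidiagonal] at hij
  rcases lt_or_ge ij.1 α with h | h
  · rw [hA _ h, zero_mul]
  · rw [hB ij.2 (by omega), mul_zero]

lemma mul_coeff_trail {A B : Polynomial ℝ} {α β : ℕ}
    (hA : ∀ i < α, A.coeff i = 0) (hB : ∀ i < β, B.coeff i = 0) :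
    (A * B).coeff (α + β) = A.coeff α * B.coeff β := by
  rw [Polynomial.coeff_mul]
  refine Finset.sum_eq_single (α, β) (fun ij hij hne => ?_)
    (fun h => absurd (Finset.HasAntidiagonal.mem_antidiagonal.mpr (rfl : α + β = α + β)) h)
  rw [Finset.HasAntidiagonal.mem_antidiagonal] at hij
  rcases lt_or_ge ij.1 α with h | h
  · rw [hA _ h, zero_mul]
  · rcases lt_or_ge ij.2 β with h2 | h2
    · rw [hB _ h2, mul_zero]
    · exact absurd (Prod.ext (by omega) (by omega)) hne

lemma pow_coeff {P : Polynomial ℝ} {m : ℕ}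
    (hP : ∀ i < m, P.coeff i = 0) (n : ℕ) :
    (∀ i < n * m, (P ^ n).coeff i = 0) ∧ (P ^ n).coeff (n * m) = (P.coeff m) ^ n := by
  induction n with
  | zero => exact ⟨fun i hi => by omega, by simp⟩
  | succ n ih =>
      have e : (n + 1) * m = n * m + m := by ring
      refine ⟨fun i hi => ?_, ?_⟩
      · rw [pow_succ]
        exact mul_coeff_zero ih.1 hP i (by omega)
      · rw [pow_succ, e, mul_coeff_trail ih.1 hP, ih.2, pow_succ]


lemma laurent_mul_coeff_zero {F G : LaurentSeries ℝ} {α β : ℤ}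
    (hF : ∀ n < α, F.coeff n = 0) (hG : ∀ n < β, G.coeff n = 0) :
    ∀ n < α + β, (F * G).coeff n = 0 := by
  intro n hn
  rw [HahnSeries.coeff_mul]
  refine Finset.sum_eq_zero fun ij hij => ?_
  rw [Finset.mem_addAntidiagonal] at hij
  obtain ⟨h1, h2, h3⟩ := hij
  rw [HahnSeries.mem_support] at h1 h2
  have hα : α ≤ ij.1 := le_of_not_gt fun h => h1 (hF _ h)
  have hβ : β ≤ ij.2 := le_of_not_gt fun h => h2 (hG _ h)
  exact absurd hn (by rw [← h3]; exact not_lt.2 (add_le_add hα hβ))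

lemma case_lt (q : ℕ) (hq : 1 ≤ q) (a : ℕ → ℝ) (ha : 0 < a 0)
    (P₁ P₂ : Polynomial ℝ) (h₁c : 0 < P₁.trailingCoeff)
    (hm : P₁.natTrailingDegree < P₂.natTrailingDegree)
    (hm₁ : 1 ≤ P₁.natTrailingDegree)
    (hR : ∀ n : ℕ, n < q * (P₁.natTrailingDegree + P₂.natTrailingDegree) →
      (∑ j ∈ Finset.range q, Polynomial.C (a j / ((q : ℝ) - j)) *
        (P₂ ^ j * P₁ ^ q - P₁ ^ j * P₂ ^ q)).coeff n = 0) : False := by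
  set m₁ := P₁.natTrailingDegree with hm₁def
  set m₂ := P₂.natTrailingDegree with hm₂def
  have ord₁ : ∀ i < m₁, P₁.coeff i = 0 := fun i hi =>
    coeff_eq_zero_of_lt_natTrailingDegree hi
  have ord₂ : ∀ i < m₂, P₂.coeff i = 0 := fun i hi =>
    coeff_eq_zero_of_lt_natTrailingDegree hi
  have hqm₂ : 0 < q * m₂ := Nat.mul_pos (by omega) (by omega)
  have key := hR (q * m₁) (by rw [Nat.mul_add]; omega)
  rw [Polynomial.finset_sum_coeff] at key
  rw [Finset.sum_eq_single 0 (fun j hj hj0 => ?_) (fun h => absurd (Finset.mem_range.mpr (by omega)) h)] at key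
  · rw [Polynomial.coeff_C_mul, Polynomial.coeff_sub, pow_zero, pow_zero, one_mul, one_mul] at key
    have e1 : (P₁ ^ q).coeff (q * m₁) = P₁.trailingCoeff ^ q := (pow_coeff ord₁ q).2
    have hqq : q * m₁ < q * m₂ := (Nat.mul_lt_mul_left (by omega : 0 < q)).mpr hm
    have e2 : (P₂ ^ q).coeff (q * m₁) = 0 := (pow_coeff ord₂ q).1 _ hqq
    rw [e1, e2, sub_zero] at key
    have hqpos : (0 : ℝ) < (q : ℝ) - ((0 : ℕ) : ℝ) := by
      simp only [Nat.cast_zero, sub_zero]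
      exact_mod_cast (by omega : 0 < q)
    have : 0 < a 0 / ((q : ℝ) - ((0 : ℕ) : ℝ)) * P₁.trailingCoeff ^ q := by positivity
    exact absurd key (ne_of_gt this)
  · have hjpos : 0 < j := by omega
    rw [Polynomial.coeff_C_mul, Polynomial.coeff_sub]
    have b1 : q * m₁ < j * m₂ + q * m₁ :=
      Nat.lt_add_of_pos_left (Nat.mul_pos hjpos (by omega))
    have e1 : (P₂ ^ j * P₁ ^ q).coeff (q * m₁) = 0 :=
      mul_coeff_zero (pow_coeff ord₂ j).1 (pow_coeff ord₁ q).1 _ b1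
    have hqq : q * m₁ < q * m₂ := (Nat.mul_lt_mul_left (by omega : 0 < q)).mpr hm
    have b2 : q * m₁ < j * m₁ + q * m₂ := by omega
    have e2 : (P₁ ^ j * P₂ ^ q).coeff (q * m₁) = 0 :=
      mul_coeff_zero (pow_coeff ord₁ j).1 (pow_coeff ord₂ q).1 _ b2
    rw [e1, e2, sub_zero, mul_zero]

lemma trailing_pos_ntd (P : Polynomial ℝ) (h0 : P.coeff 0 = 0) (hc : 0 < P.trailingCoeff) :
    1 ≤ P.natTrailingDegree := by
  by_contra h
  push_neg at h
  have h0' : P.natTrailingDegree = 0 := by omega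
  have : P.trailingCoeff = P.coeff 0 := by
    rw [Polynomial.trailingCoeff, h0']
  rw [this, h0] at hc
  exact lt_irrefl _ hc

lemma poly_main (q : ℕ) (hq : 1 ≤ q) (a : ℕ → ℝ) (ha : 0 < a 0)
    (P₁ P₂ : Polynomial ℝ)
    (h₁0 : P₁.coeff 0 = 0) (h₁ne : P₁ ≠ 0) (h₁c : 0 < P₁.trailingCoeff)
    (h₁short : P₁.natDegree < (q + 1) * P₁.natTrailingDegree)
    (h₂0 : P₂.coeff 0 = 0) (h₂ne : P₂ ≠ 0) (h₂c : 0 < P₂.trailingCoeff)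
    (h₂short : P₂.natDegree < (q + 1) * P₂.natTrailingDegree)
    (hne : P₁ ≠ P₂)
    (hR : ∀ n : ℕ, n < q * (P₁.natTrailingDegree + P₂.natTrailingDegree) →
      (∑ j ∈ Finset.range q, Polynomial.C (a j / ((q : ℝ) - j)) *
        (P₂ ^ j * P₁ ^ q - P₁ ^ j * P₂ ^ q)).coeff n = 0) : False := by
  have hm₁ : 1 ≤ P₁.natTrailingDegree := trailing_pos_ntd P₁ h₁0 h₁c
  have hm₂ : 1 ≤ P₂.natTrailingDegree := trailing_pos_ntd P₂ h₂0 h₂c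
  rcases lt_trichotomy P₁.natTrailingDegree P₂.natTrailingDegree with hlt | heq | hgt
  · exact case_lt q hq a ha P₁ P₂ h₁c hlt hm₁ hR
  · -- the equal case, done below
    set m₁ := P₁.natTrailingDegree with hm₁def
    set m₂ := P₂.natTrailingDegree with hm₂def
    have ord₁ : ∀ i < m₁, P₁.coeff i = 0 := fun i hi =>
      Polynomial.coeff_eq_zero_of_lt_natTrailingDegree hi
    have ord₂ : ∀ i < m₁, P₂.coeff i = 0 := fun i hi =>
      Polynomial.coeff_eq_zero_of_lt_natTrailingDegree
        (show i < P₂.natTrailingDegree by rw [← hm₂def, ← heq]; exact hi)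
    have hc₂m : P₂.coeff m₁ = P₂.trailingCoeff := by
      rw [Polynomial.trailingCoeff, ← hm₂def, heq]
    have hc₁m : P₁.coeff m₁ = P₁.trailingCoeff := rfl
    have hqm : 0 < q * m₁ := Nat.mul_pos (by omega) (by omega)
    -- Step 1: trailing coefficients agree
    have hcc : P₁.trailingCoeff = P₂.trailingCoeff := by
      by_contra hc
      have key := hR (q * m₁) (by rw [Nat.mul_add, ← heq]; omega)
      rw [Polynomial.finset_sum_coeff] at key
      rw [Finset.sum_eq_single 0 (fun j hj hj0 => ?_)
        (fun h => absurd (Finset.mem_range.mpr (by omega)) h)] at key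
      · rw [Polynomial.coeff_C_mul, Polynomial.coeff_sub, pow_zero, pow_zero,
          one_mul, one_mul] at key
        rw [(pow_coeff ord₁ q).2, (pow_coeff ord₂ q).2, hc₁m, hc₂m] at key
        have hq0 : ((q : ℝ) - ((0 : ℕ) : ℝ)) ≠ 0 := by
          simp only [Nat.cast_zero, sub_zero]
          exact_mod_cast (by omega : q ≠ 0)
        have hpow : P₁.trailingCoeff ^ q = P₂.trailingCoeff ^ q := by
          have := mul_eq_zero.mp key
          rcases this with h | h
          · exact absurd h (div_ne_zero (ne_of_gt ha) hq0)
          · linarith [sub_eq_zero.mp h]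
        rcases lt_trichotomy P₁.trailingCoeff P₂.trailingCoeff with h | h | h
        · exact absurd hpow (ne_of_lt (pow_lt_pow_left₀ h h₁c.le (by omega)))
        · exact hc h
        · exact absurd hpow.symm (ne_of_lt (pow_lt_pow_left₀ h h₂c.le (by omega)))
      · have hjpos : 0 < j := by omega
        rw [Polynomial.coeff_C_mul, Polynomial.coeff_sub]
        have hb : q * m₁ < j * m₁ + q * m₁ :=
          Nat.lt_add_of_pos_left (Nat.mul_pos hjpos (by omega))
        have e1 : (P₂ ^ j * P₁ ^ q).coeff (q * m₁) = 0 :=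
          mul_coeff_zero (pow_coeff ord₂ j).1 (pow_coeff ord₁ q).1 _ hb
        have e2 : (P₁ ^ j * P₂ ^ q).coeff (q * m₁) = 0 :=
          mul_coeff_zero (pow_coeff ord₁ j).1 (pow_coeff ord₂ q).1 _ hb
        rw [e1, e2, sub_zero, mul_zero]
    -- Step 2: the difference polynomial
    set D := P₁ - P₂ with hDdef
    have hD : D ≠ 0 := sub_ne_zero.mpr hne
    have hδ : D.trailingCoeff ≠ 0 := fun h => hD (Polynomial.trailingCoeff_eq_zero.mp h)
    have htm : m₁ + 1 ≤ D.natTrailingDegree := by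
      apply Polynomial.le_natTrailingDegree hD
      intro i hi
      rcases lt_or_ge i m₁ with h | h
      · rw [hDdef, Polynomial.coeff_sub, ord₁ i h, ord₂ i h, sub_zero]
      · have : i = m₁ := by omega
        rw [hDdef, Polynomial.coeff_sub, this, hc₁m, hc₂m, hcc, sub_self]
    have htub : D.natTrailingDegree < (q + 1) * m₁ := by
      calc D.natTrailingDegree ≤ D.natDegree := Polynomial.natTrailingDegree_le_natDegree D
        _ ≤ max P₁.natDegree P₂.natDegree := Polynomial.natDegree_sub_le P₁ P₂
        _ < (q + 1) * m₁ := by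
            rw [max_lt_iff]
            exact ⟨h₁short, by rw [heq]; exact h₂short⟩
    set k := D.natTrailingDegree - m₁ with hkdef
    have hk1 : 1 ≤ k := by omega
    have htk : D.natTrailingDegree = m₁ + k := by omega
    have hkq : k < q * m₁ := by
      have e : (q + 1) * m₁ = q * m₁ + m₁ := by ring
      omega
    have ordD : ∀ i < m₁ + k, D.coeff i = 0 := fun i hi =>
      Polynomial.coeff_eq_zero_of_lt_natTrailingDegree (by omega)
    have hDk : D.coeff (m₁ + k) = D.trailingCoeff := by
      rw [Polynomial.trailingCoeff, htk]
    -- geometric sums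
    set H : ℕ → Polynomial ℝ := fun n => ∑ i ∈ Finset.range n, P₁ ^ i * P₂ ^ (n - 1 - i)
      with hHdef
    have hgeom : ∀ n, H n * D = P₁ ^ n - P₂ ^ n := fun n => geom_sum₂_mul P₁ P₂ n
    have ordH : ∀ n, ∀ i < (n - 1) * m₁, (H n).coeff i = 0 := by
      intro n i hi
      rw [hHdef]
      rw [Polynomial.finset_sum_coeff]
      refine Finset.sum_eq_zero fun l hl => ?_
      rw [Finset.mem_range] at hl
      have e : (n - 1) * m₁ = l * m₁ + (n - 1 - l) * m₁ := by
        rw [← Nat.add_mul]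
        congr 1
        omega
      exact mul_coeff_zero (pow_coeff ord₁ l).1 (pow_coeff ord₂ (n - 1 - l)).1 _ (by omega)
    have eq1 : (q - 1) * m₁ + m₁ = q * m₁ := by
      obtain ⟨r, rfl⟩ := Nat.exists_eq_succ_of_ne_zero (by omega : q ≠ 0)
      simp [Nat.succ_sub_one, Nat.succ_mul]
    have hHq : (H q).coeff ((q - 1) * m₁) = (q : ℝ) * P₁.trailingCoeff ^ (q - 1) := by
      rw [hHdef]
      rw [Polynomial.finset_sum_coeff]
      rw [Finset.sum_congr rfl (fun l hl => ?_), Finset.sum_const, Finset.card_range,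
        nsmul_eq_mul]
      rw [Finset.mem_range] at hl
      have e : (q - 1) * m₁ = l * m₁ + (q - 1 - l) * m₁ := by
        rw [← Nat.add_mul]; congr 1; omega
      rw [e, mul_coeff_trail (pow_coeff ord₁ l).1 (pow_coeff ord₂ (q - 1 - l)).1,
        (pow_coeff ord₁ l).2, (pow_coeff ord₂ (q - 1 - l)).2, hc₁m, hc₂m, ← hcc, ← pow_add]
      congr 1
      omega
    -- the key coefficient
    have key := hR (q * m₁ + k) (by rw [Nat.mul_add, ← heq]; omega)
    rw [Polynomial.finset_sum_coeff] at key
    rw [Finset.sum_eq_single 0 (fun j hj hj0 => ?_)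
      (fun h => absurd (Finset.mem_range.mpr (by omega)) h)] at key
    · rw [Polynomial.coeff_C_mul, Polynomial.coeff_sub, pow_zero, pow_zero,
        one_mul, one_mul, ← Polynomial.coeff_sub, ← hgeom q] at key
      have e2 : q * m₁ + k = (q - 1) * m₁ + (m₁ + k) := by omega
      rw [e2, mul_coeff_trail (ordH q) ordD, hHq, hDk] at key
      have hq0 : ((q : ℝ) - ((0 : ℕ) : ℝ)) ≠ 0 := by
        simp only [Nat.cast_zero, sub_zero]
        exact_mod_cast (by omega : q ≠ 0)
      have hq0' : ((q : ℝ)) ≠ 0 := by exact_mod_cast (by omega : q ≠ 0)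
      exact absurd key (mul_ne_zero (div_ne_zero (ne_of_gt ha) hq0)
        (mul_ne_zero (mul_ne_zero hq0' (pow_ne_zero _ (ne_of_gt h₁c))) hδ))
    · -- j ≠ 0 terms vanish
      have hjpos : 0 < j := by omega
      rw [Finset.mem_range] at hj
      rw [Polynomial.coeff_C_mul, Polynomial.coeff_sub]
      have iden : P₂ ^ j * P₁ ^ q - P₁ ^ j * P₂ ^ q
          = P₂ ^ j * (H q * D) - H j * D * P₂ ^ q := by
        rw [hgeom q, hgeom j]; ring
      have hco : (P₂ ^ j * P₁ ^ q).coeff (q * m₁ + k) - (P₁ ^ j * P₂ ^ q).coeff (q * m₁ + k)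
          = (P₂ ^ j * (H q * D)).coeff (q * m₁ + k) - (H j * D * P₂ ^ q).coeff (q * m₁ + k) := by
        rw [← Polynomial.coeff_sub, ← Polynomial.coeff_sub, iden]
      rw [hco]
      have hjm : 0 < j * m₁ := Nat.mul_pos hjpos (by omega)
      have z1 : (P₂ ^ j * (H q * D)).coeff (q * m₁ + k) = 0 := by
        apply mul_coeff_zero (pow_coeff ord₂ j).1
          (mul_coeff_zero (ordH q) ordD)
        omega
      have z2 : (H j * D * P₂ ^ q).coeff (q * m₁ + k) = 0 := by
        apply mul_coeff_zero (mul_coeff_zero (ordH j) ordD) (pow_coeff ord₂ q).1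
        have : 0 ≤ (j - 1) * m₁ := Nat.zero_le _
        omega
      rw [z1, z2, sub_zero, mul_zero]
  · -- symmetric case
    apply case_lt q hq a ha P₂ P₁ h₂c hgt hm₂
    intro n hn
    have h0 := hR n (by rw [Nat.add_comm P₁.natTrailingDegree P₂.natTrailingDegree]; exact hn)
    have hswap : (∑ j ∈ Finset.range q, Polynomial.C (a j / ((q : ℝ) - j)) *
          (P₁ ^ j * P₂ ^ q - P₂ ^ j * P₁ ^ q))
        = -(∑ j ∈ Finset.range q, Polynomial.C (a j / ((q : ℝ) - j)) *
          (P₂ ^ j * P₁ ^ q - P₁ ^ j * P₂ ^ q)) := by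
      rw [← Finset.sum_neg_distrib]
      exact Finset.sum_congr rfl fun j _ => by ring
    rw [hswap, Polynomial.coeff_neg, h0, neg_zero]

lemma coe_ne_zero' {P : Polynomial ℝ} (h : P ≠ 0) :
    ((P : PowerSeries ℝ) : LaurentSeries ℝ) ≠ 0 := by
  intro hc
  apply h
  rw [← Polynomial.coe_eq_zero_iff]
  apply HahnSeries.ofPowerSeries_injective (Γ := ℤ)
  rw [map_zero]
  exact hc

lemma key_eq (q : ℕ) (a : ℕ → ℝ) (P₁ P₂ : Polynomial ℝ) (h₁ : P₁ ≠ 0) (h₂ : P₂ ≠ 0) :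
    (QcompP q a P₁ - QcompP q a P₂) *
      ((((P₁ : PowerSeries ℝ) : LaurentSeries ℝ)) ^ q *
        (((P₂ : PowerSeries ℝ) : LaurentSeries ℝ)) ^ q)
    = (((∑ j ∈ Finset.range q, Polynomial.C (a j / ((q : ℝ) - j)) *
        (P₂ ^ j * P₁ ^ q - P₁ ^ j * P₂ ^ q) : Polynomial ℝ) : PowerSeries ℝ) :
        LaurentSeries ℝ) := by
  set S₁ : LaurentSeries ℝ := ((P₁ : PowerSeries ℝ) : LaurentSeries ℝ) with hS₁def
  set S₂ : LaurentSeries ℝ := ((P₂ : PowerSeries ℝ) : LaurentSeries ℝ) with hS₂def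
  have hS₁ : S₁ ≠ 0 := coe_ne_zero' h₁
  have hS₂ : S₂ ≠ 0 := coe_ne_zero' h₂
  have hφ : ∀ f : Polynomial ℝ, ((f : PowerSeries ℝ) : LaurentSeries ℝ)
      = ((HahnSeries.ofPowerSeries ℤ ℝ).comp Polynomial.coeToPowerSeries.ringHom) f :=
    fun f => rfl
  have hC : ∀ r : ℝ,
      ((HahnSeries.ofPowerSeries ℤ ℝ).comp Polynomial.coeToPowerSeries.ringHom)
        (Polynomial.C r) = HahnSeries.C r := by
    intro r
    rw [RingHom.comp_apply]
    have h1 : (Polynomial.coeToPowerSeries.ringHom (Polynomial.C r) : PowerSeries ℝ)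
        = PowerSeries.C r := by
      rw [Polynomial.coeToPowerSeries.ringHom_apply, Polynomial.coe_C]
    rw [h1, HahnSeries.ofPowerSeries_C]
  have hRHS : (((∑ j ∈ Finset.range q, Polynomial.C (a j / ((q : ℝ) - j)) *
        (P₂ ^ j * P₁ ^ q - P₁ ^ j * P₂ ^ q) : Polynomial ℝ) : PowerSeries ℝ) :
        LaurentSeries ℝ)
      = ∑ j ∈ Finset.range q,
          HahnSeries.C (a j / ((q : ℝ) - j)) * (S₂ ^ j * S₁ ^ q - S₁ ^ j * S₂ ^ q) := by
    rw [hφ, map_sum]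
    refine Finset.sum_congr rfl fun j _ => ?_
    rw [map_mul, map_sub, map_mul, map_mul, map_pow, map_pow, map_pow, map_pow, hC]
    rfl
  rw [hRHS]
  have expand : QcompP q a P₁ - QcompP q a P₂
      = ((∑ j ∈ Finset.range q, (a j / ((q : ℝ) - j)) • S₂ ^ j) * S₁ ^ q
          - (∑ j ∈ Finset.range q, (a j / ((q : ℝ) - j)) • S₁ ^ j) * S₂ ^ q)
        / (S₁ ^ q * S₂ ^ q) := by
    rw [QcompP, QcompP, ← hS₁def, ← hS₂def]
    rw [div_sub_div _ _ (pow_ne_zero q hS₁) (pow_ne_zero q hS₂)]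
    congr 1
    ring
  rw [expand, div_mul_cancel₀ _ (mul_ne_zero (pow_ne_zero q hS₁) (pow_ne_zero q hS₂))]
  simp only [← HahnSeries.C_mul_eq_smul]
  rw [Finset.sum_mul, Finset.sum_mul, ← Finset.sum_sub_distrib]
  exact Finset.sum_congr rfl fun j _ => by ring

theorem stmt3' (q : ℕ) (hq : 1 ≤ q) (a : ℕ → ℝ) (ha : 0 < a 0)
    (P₁ P₂ : Polynomial ℝ)
    (h₁0 : P₁.coeff 0 = 0) (h₁ne : P₁ ≠ 0) (h₁c : 0 < P₁.trailingCoeff)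
    (h₁short : P₁.natDegree < (q + 1) * P₁.natTrailingDegree)
    (h₂0 : P₂.coeff 0 = 0) (h₂ne : P₂ ≠ 0) (h₂c : 0 < P₂.trailingCoeff)
    (h₂short : P₂.natDegree < (q + 1) * P₂.natTrailingDegree)
    (hne : P₁ ≠ P₂) :
    ∃ n : ℤ, n < 0 ∧ (QcompP q a P₁ - QcompP q a P₂).coeff n ≠ 0 := by
  by_contra hcon
  push_neg at hcon
  apply poly_main q hq a ha P₁ P₂ h₁0 h₁ne h₁c h₁short h₂0 h₂ne h₂c h₂short hne
  intro n hn
  set m₁ := P₁.natTrailingDegree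
  set m₂ := P₂.natTrailingDegree
  have ord₁ : ∀ i < m₁, P₁.coeff i = 0 := fun i hi =>
    Polynomial.coeff_eq_zero_of_lt_natTrailingDegree hi
  have ord₂ : ∀ i < m₂, P₂.coeff i = 0 := fun i hi =>
    Polynomial.coeff_eq_zero_of_lt_natTrailingDegree hi
  -- translate to the Laurent series coefficient
  have e1 : ((∑ j ∈ Finset.range q, Polynomial.C (a j / ((q : ℝ) - j)) *
        (P₂ ^ j * P₁ ^ q - P₁ ^ j * P₂ ^ q)).coeff n : ℝ)
      = ((((∑ j ∈ Finset.range q, Polynomial.C (a j / ((q : ℝ) - j)) *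
        (P₂ ^ j * P₁ ^ q - P₁ ^ j * P₂ ^ q) : Polynomial ℝ) : PowerSeries ℝ) :
        LaurentSeries ℝ)).coeff (n : ℤ) := by
    rw [PowerSeries.coeff_coe, if_neg (by exact_mod_cast Int.not_lt.mpr (Int.natCast_nonneg n)),
      Int.natAbs_natCast, Polynomial.coeff_coe]
  rw [e1, ← key_eq q a P₁ P₂ h₁ne h₂ne]
  have hG : ∀ t : ℤ, t < ((q * m₁ + q * m₂ : ℕ) : ℤ) →
      ((((P₁ : PowerSeries ℝ) : LaurentSeries ℝ)) ^ q *
        (((P₂ : PowerSeries ℝ) : LaurentSeries ℝ)) ^ q).coeff t = 0 := by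
    intro t ht
    have hcast : (((P₁ : PowerSeries ℝ) : LaurentSeries ℝ)) ^ q *
        (((P₂ : PowerSeries ℝ) : LaurentSeries ℝ)) ^ q
        = (((P₁ ^ q * P₂ ^ q : Polynomial ℝ) : PowerSeries ℝ) : LaurentSeries ℝ) := by
      rw [Polynomial.coe_mul, Polynomial.coe_pow, Polynomial.coe_pow,
        PowerSeries.coe_mul, PowerSeries.coe_pow, PowerSeries.coe_pow]
    rw [hcast, PowerSeries.coeff_coe]
    split_ifs with h
    · rfl
    · rw [Polynomial.coeff_coe]
      exact mul_coeff_zero (pow_coeff ord₁ q).1 (pow_coeff ord₂ q).1 t.natAbs (by omega)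
  have := laurent_mul_coeff_zero (α := 0) (β := ((q * m₁ + q * m₂ : ℕ) : ℤ))
    (fun t ht => hcon t ht) hG (n : ℤ)
    (by rw [zero_add]; exact_mod_cast (by rw [← Nat.mul_add]; exact hn))
  exact this

end Stmt3Aux

/-- for distinct `q`-short positive polynomials `P₁, P₂`, the Laurent
series `Q ∘ P₁ - Q ∘ P₂` has nonzero principal part. -/
theorem stmt3 (q : ℕ) (hq : 1 ≤ q) (a : ℕ → ℝ) (ha : 0 < a 0)
    (P₁ P₂ : Polynomial ℝ)
    (h₁0 : P₁.coeff 0 = 0) (h₁ne : P₁ ≠ 0) (h₁c : 0 < P₁.trailingCoeff)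
    (h₁short : P₁.natDegree < (q + 1) * P₁.natTrailingDegree)
    (h₂0 : P₂.coeff 0 = 0) (h₂ne : P₂ ≠ 0) (h₂c : 0 < P₂.trailingCoeff)
    (h₂short : P₂.natDegree < (q + 1) * P₂.natTrailingDegree)
    (hne : P₁ ≠ P₂) :
    ∃ n : ℤ, n < 0 ∧ (QcompP q a P₁ - QcompP q a P₂).coeff n ≠ 0 :=
  Stmt3Aux.stmt3' q hq a ha P₁ P₂ h₁0 h₁ne h₁c h₁short h₂0 h₂ne h₂c h₂short hne
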